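/- For every n ≥ 1, every m > 0 and every x ∈ ℝ^n with ‖x‖ ≤ 1, one has −1/m ≤ W_m^*(x) < 0. In particular, W_m^* converges to 0 uniformly on the closed unit ball as m → ∞. -/

import Mathlib

noncomputable section

/-- The regularized energy density `W_m(p) = (‖p‖² + m⁻²)^{1/2} + m⁻¹‖p‖²`. -/
def Wfun (n : ℕ) (m : ℝ) (p : EuclideanSpace ℝ (Fin n)) : ℝ :=
  Real.sqrt (‖p‖ ^ 2 + m⁻¹ ^ 2) + m⁻¹ * ‖p‖ ^ 2

/-- The Legendre–Fenchel conjugate `W_m^*(x) = sup_p (⟨p,x⟩ - W_m(p))`. -/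
def Wstar (n : ℕ) (m : ℝ) (x : EuclideanSpace ℝ (Fin n)) : ℝ :=
  sSup (Set.range fun p => (inner ℝ p x : ℝ) - Wfun n m p)

lemma key_ineq (m t : ℝ) (hm : 0 < m) (ht : 0 ≤ t) :
    t - Real.sqrt (t ^ 2 + m⁻¹ ^ 2) - m⁻¹ * t ^ 2 ≤
      - min m (m⁻¹ ^ 2 / (2 * m + m⁻¹)) := by
  have hmi : 0 < m⁻¹ := inv_pos.2 hm
  have hd : 0 < 2 * t + m⁻¹ := by linarith
  have hdm : 0 < 2 * m + m⁻¹ := by linarith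
  have hs : t + m⁻¹ ^ 2 / (2 * t + m⁻¹) ≤ Real.sqrt (t ^ 2 + m⁻¹ ^ 2) := by
    rw [Real.le_sqrt (by positivity) (by positivity)]
    set A := m⁻¹ ^ 2 / (2 * t + m⁻¹) with hAdef
    have hA : A * (2 * t + m⁻¹) = m⁻¹ ^ 2 := div_mul_cancel₀ _ hd.ne'
    have hA0 : 0 ≤ A := by positivity
    have hAle : A ≤ m⁻¹ := by
      rw [hAdef, div_le_iff₀ hd]; nlinarith
    nlinarith [mul_nonneg hA0 (sub_nonneg.2 hAle)]
  rcases le_total t m with h | h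
  · have h1 : m⁻¹ ^ 2 / (2 * m + m⁻¹) ≤ m⁻¹ ^ 2 / (2 * t + m⁻¹) :=
      div_le_div_of_nonneg_left (by positivity) hd (by linarith)
    have h2 : min m (m⁻¹ ^ 2 / (2 * m + m⁻¹)) ≤ m⁻¹ ^ 2 / (2 * m + m⁻¹) :=
      min_le_right _ _
    nlinarith [mul_nonneg hmi.le (sq_nonneg t)]
  · have h2 : min m (m⁻¹ ^ 2 / (2 * m + m⁻¹)) ≤ m := min_le_left _ _
    have h3 : m ≤ m⁻¹ * t ^ 2 := by
      have : m * m ≤ t * t := mul_le_mul h h hm.le ht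
      rw [show m⁻¹ * t ^ 2 = (t * t) / m by field_simp, le_div_iff₀ hm]
      nlinarith
    have h4 : 0 ≤ m⁻¹ ^ 2 / (2 * t + m⁻¹) := by positivity
    linarith

lemma Wstar_bounds (n : ℕ) (m : ℝ) (hm : 0 < m) (x : EuclideanSpace ℝ (Fin n))
    (hx : ‖x‖ ≤ 1) :
    -1 / m ≤ Wstar n m x ∧ Wstar n m x ≤ - min m (m⁻¹ ^ 2 / (2 * m + m⁻¹)) := by
  have hmi : 0 < m⁻¹ := inv_pos.2 hm
  have hub : ∀ p : EuclideanSpace ℝ (Fin n),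
      (inner ℝ p x : ℝ) - Wfun n m p ≤ - min m (m⁻¹ ^ 2 / (2 * m + m⁻¹)) := by
    intro p
    have h1 : (inner ℝ p x : ℝ) ≤ ‖p‖ := by
      calc (inner ℝ p x : ℝ) ≤ ‖p‖ * ‖x‖ := real_inner_le_norm p x
        _ ≤ ‖p‖ * 1 := mul_le_mul_of_nonneg_left hx (norm_nonneg p)
        _ = ‖p‖ := mul_one _
    have h2 := key_ineq m ‖p‖ hm (norm_nonneg p)
    unfold Wfun
    linarith
  have hbdd : BddAbove (Set.range fun p : EuclideanSpace ℝ (Fin n) =>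
      (inner ℝ p x : ℝ) - Wfun n m p) :=
    ⟨_, by rintro y ⟨p, rfl⟩; exact hub p⟩
  constructor
  · have h0 : (inner ℝ (0 : EuclideanSpace ℝ (Fin n)) x : ℝ) - Wfun n m 0 = -1 / m := by
      simp only [Wfun, inner_zero_left, norm_zero, zero_pow, zero_add, mul_zero, add_zero,
        ne_eq, OfNat.ofNat_ne_zero, not_false_eq_true]
      rw [Real.sqrt_sq hmi.le]; ring
    unfold Wstar
    simpa only [h0] using le_csSup hbdd ⟨(0 : EuclideanSpace ℝ (Fin n)), rfl⟩
  · exact csSup_le ⟨_, ⟨(0 : EuclideanSpace ℝ (Fin n)), rfl⟩⟩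
      (by rintro y ⟨p, rfl⟩; exact hub p)

/-- On the closed unit ball, `-1/m ≤ W_m^* < 0`; in particular `W_m^* → 0` uniformly on the
closed unit ball as `m → ∞`. -/
theorem Wstar_unit_ball (n : ℕ) (hn : 1 ≤ n) :
    (∀ m : ℝ, 0 < m → ∀ x : EuclideanSpace ℝ (Fin n), ‖x‖ ≤ 1 →
      -1 / m ≤ Wstar n m x ∧ Wstar n m x < 0) ∧
    TendstoUniformlyOn (fun (m : ℝ) (x : EuclideanSpace ℝ (Fin n)) => Wstar n m x)
      (fun _ => 0) Filter.atTop (Metric.closedBall 0 1) := by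
  constructor
  · intro m hm x hx
    obtain ⟨h1, h2⟩ := Wstar_bounds n m hm x hx
    have hmi : 0 < m⁻¹ := inv_pos.2 hm
    have hpos : 0 < min m (m⁻¹ ^ 2 / (2 * m + m⁻¹)) :=
      lt_min hm (by positivity)
    exact ⟨h1, lt_of_le_of_lt h2 (by linarith)⟩
  · rw [Metric.tendstoUniformlyOn_iff]
    intro ε hε
    filter_upwards [Filter.eventually_ge_atTop (max 1 (2 / ε))] with m hm' x hx
    have hm1 : (1 : ℝ) ≤ m := le_trans (le_max_left _ _) hm'
    have hm0 : (0 : ℝ) < m := by linarith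
    have hx' : ‖x‖ ≤ 1 := by simpa using Metric.mem_closedBall.1 hx
    obtain ⟨h1, h2⟩ := Wstar_bounds n m hm0 x hx'
    have hmi : 0 < m⁻¹ := inv_pos.2 hm0
    have hpos : 0 < min m (m⁻¹ ^ 2 / (2 * m + m⁻¹)) := lt_min hm0 (by positivity)
    have hW0 : Wstar n m x ≤ 0 := by linarith
    have hstep : 1 / m ≤ ε / 2 := by
      have h2e : 2 / ε ≤ m := le_trans (le_max_right _ _) hm'
      rw [div_le_div_iff₀ hm0 (by norm_num)]
      have := (div_le_iff₀ hε).1 h2e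
      linarith
    rw [Real.dist_eq]
    have : |0 - Wstar n m x| = - Wstar n m x := by
      rw [abs_of_nonneg] <;> linarith
    rw [this]
    have : - Wstar n m x ≤ 1 / m := by
      rw [neg_le]
      have : -(1 / m) = -1 / m := by ring
      linarith [h1]
    linarith
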